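/- Let d be a metric on ℕ satisfying the summability condition and let γ > 0. If M : ℕ × ℕ → ℝ belongs to the Jaffard class J(d,γ), then the matrix |M| with entries |M_{ij}| induces a bounded operator on ℓ²; in particular M itself induces a bounded operator on ℓ². -/

import Mathlib

set_option maxHeartbeats 1000000


abbrev Mat := ℕ → ℕ → ℝ

noncomputable def mulVec (M : Mat) (x : ℕ → ℝ) : ℕ → ℝ := fun i => ∑' j, M i j * x j

def Memℓ2 (x : ℕ → ℝ) : Prop := Summable fun i => x i ^ 2

noncomputable def l2norm (x : ℕ → ℝ) : ℝ := Real.sqrt (∑' i, x i ^ 2)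

def BoundedWith (M : Mat) (K : ℝ) : Prop :=
  ∀ x : ℕ → ℝ, Memℓ2 x →
    (∀ i, Summable fun j => |M i j * x j|) ∧ Memℓ2 (mulVec M x) ∧
      l2norm (mulVec M x) ≤ K * l2norm x

def IsBoundedOp (M : Mat) : Prop := ∃ K : ℝ, 0 ≤ K ∧ BoundedWith M K

def IsMetric (d : ℕ → ℕ → ℝ) : Prop :=
  (∀ i j, 0 ≤ d i j) ∧ (∀ i j, d i j = 0 ↔ i = j) ∧ (∀ i j, d i j = d j i) ∧
    ∀ i j k, d i k ≤ d i j + d j k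

/-- The summability condition `sup_i Σ_j exp(−ε d(i,j)) < ∞` for every `ε > 0`. -/
def SummCond (d : ℕ → ℕ → ℝ) : Prop :=
  ∀ ε : ℝ, 0 < ε → ∃ S : ℝ, ∀ i,
    (Summable fun j => Real.exp (-ε * d i j)) ∧ (∑' j, Real.exp (-ε * d i j)) ≤ S

/-- Jaffard class `J(d,γ)`. -/
def Jaffard (d : ℕ → ℕ → ℝ) (γ : ℝ) (M : Mat) : Prop :=
  ∀ γ' : ℝ, 0 < γ' → γ' < γ → ∃ C : ℝ, 0 < C ∧ ∀ i j, |M i j| ≤ C * Real.exp (-γ' * d i j)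

/-- Cauchy–Schwarz for tsums of nonneg sequences. -/
lemma tsum_cs {f g : ℕ → ℝ} (hf0 : ∀ j, 0 ≤ f j) (hg0 : ∀ j, 0 ≤ g j)
    (hf : Summable fun j => f j ^ 2) (hg : Summable fun j => g j ^ 2) :
    (∑' j, f j * g j) ^ 2 ≤ (∑' j, f j ^ 2) * ∑' j, g j ^ 2 := by
  have hfg : Summable fun j => f j * g j := by
    refine Summable.of_nonneg_of_le (fun j => mul_nonneg (hf0 j) (hg0 j))
      (fun j => ?_) ((hf.add hg).div_const 2)
    nlinarith [sq_nonneg (f j - g j)]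
  set X := ∑' j, f j ^ 2
  set Y := ∑' j, g j ^ 2
  have hX : 0 ≤ X := tsum_nonneg fun j => sq_nonneg _
  have hY : 0 ≤ Y := tsum_nonneg fun j => sq_nonneg _
  have key : ∑' j, f j * g j ≤ Real.sqrt (X * Y) := by
    refine Summable.tsum_le_of_sum_le hfg fun s => ?_
    have h1 : (∑ j ∈ s, f j * g j) ^ 2 ≤ (∑ j ∈ s, f j ^ 2) * ∑ j ∈ s, g j ^ 2 :=
      Finset.sum_mul_sq_le_sq_mul_sq s f g
    have h2 : (∑ j ∈ s, f j ^ 2) * ∑ j ∈ s, g j ^ 2 ≤ X * Y :=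
      mul_le_mul (Summable.sum_le_tsum s (fun j _ => sq_nonneg _) hf)
        (Summable.sum_le_tsum s (fun j _ => sq_nonneg _) hg)
        (Finset.sum_nonneg fun j _ => sq_nonneg _) hX
    have hs0 : 0 ≤ ∑ j ∈ s, f j * g j :=
      Finset.sum_nonneg fun j _ => mul_nonneg (hf0 j) (hg0 j)
    have h3 : X * Y = Real.sqrt (X * Y) ^ 2 := (Real.sq_sqrt (mul_nonneg hX hY)).symm
    nlinarith [Real.sqrt_nonneg (X * Y)]
  have h0 : 0 ≤ ∑' j, f j * g j := tsum_nonneg fun j => mul_nonneg (hf0 j) (hg0 j)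
  calc (∑' j, f j * g j) ^ 2 ≤ Real.sqrt (X * Y) ^ 2 := pow_le_pow_left₀ h0 key 2
    _ = X * Y := Real.sq_sqrt (mul_nonneg hX hY)

/-- Schur-test core lemma. -/
lemma core_bounded (d : ℕ → ℕ → ℝ) (hd : IsMetric d) (ε : ℝ) (hε : 0 < ε)
    (S : ℝ) (hS : ∀ i, (Summable fun j => Real.exp (-ε * d i j)) ∧
      (∑' j, Real.exp (-ε * d i j)) ≤ S)
    (C : ℝ) (hC : 0 < C) (M : Mat)
    (hM : ∀ i j, |M i j| ≤ C * Real.exp (-ε * d i j)) : IsBoundedOp M := by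
  set a : ℕ → ℕ → ℝ := fun i j => Real.exp (-ε * d i j) with ha
  have ha_pos : ∀ i j, 0 < a i j := fun i j => Real.exp_pos _
  have ha_le1 : ∀ i j, a i j ≤ 1 := fun i j =>
    Real.exp_le_one_iff.mpr (by nlinarith [hd.1 i j])
  have ha_symm : ∀ i j, a i j = a j i := fun i j => by simp only [ha, hd.2.2.1 i j]
  have hS0 : 0 < S := lt_of_lt_of_le (ha_pos 0 0)
    (le_trans (Summable.le_tsum (hS 0).1 0 fun j _ => (ha_pos 0 j).le) (hS 0).2)
  refine ⟨C * S, by positivity, fun x hx => ?_⟩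
  have hax2 : ∀ i, Summable fun j => a i j * x j ^ 2 := fun i =>
    Summable.of_nonneg_of_le (fun j => mul_nonneg (ha_pos i j).le (sq_nonneg _))
      (fun j => by nlinarith [ha_le1 i j, ha_pos i j, sq_nonneg (x j)]) hx
  have haxs : ∀ i, Summable fun j => a i j * |x j| := by
    intro i
    refine Summable.of_nonneg_of_le (fun j => mul_nonneg (ha_pos i j).le (abs_nonneg _))
      (fun j => ?_) (((hS i).1.add (hax2 i)).div_const 2)
    have h := ha_le1 i j; have h2 := (ha_pos i j).le
    nlinarith [sq_nonneg (1 - |x j|), sq_abs (x j), abs_nonneg (x j)]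
  have habs : ∀ i, Summable fun j => |M i j * x j| := by
    intro i
    refine Summable.of_nonneg_of_le (fun j => abs_nonneg _) (fun j => ?_)
      ((haxs i).mul_left C)
    rw [abs_mul]
    exact (mul_le_mul_of_nonneg_right (hM i j) (abs_nonneg _)).trans (by rw [mul_assoc])
  set b : ℕ → ℝ := fun i => ∑' j, a i j * x j ^ 2 with hb
  have hb0 : ∀ i, 0 ≤ b i := fun i => tsum_nonneg fun j =>
    mul_nonneg (ha_pos i j).le (sq_nonneg _)
  have key : ∀ i, (∑' j, a i j * |x j|) ^ 2 ≤ S * b i := by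
    intro i
    have hcs := tsum_cs (f := fun j => Real.sqrt (a i j))
      (g := fun j => Real.sqrt (a i j) * |x j|)
      (fun j => Real.sqrt_nonneg _) (fun j => mul_nonneg (Real.sqrt_nonneg _) (abs_nonneg _))
      (by
        have e : (fun j => Real.sqrt (a i j) ^ 2) = fun j => a i j := by
          funext j; rw [Real.sq_sqrt (ha_pos i j).le]
        rw [e]; exact (hS i).1)
      (by
        have e : (fun j => (Real.sqrt (a i j) * |x j|) ^ 2) = fun j => a i j * x j ^ 2 := by
          funext j; rw [mul_pow, Real.sq_sqrt (ha_pos i j).le, sq_abs]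
        rw [e]; exact hax2 i)
    have e1 : (fun j => Real.sqrt (a i j) * (Real.sqrt (a i j) * |x j|)) =
        fun j => a i j * |x j| := by
      funext j; rw [← mul_assoc, Real.mul_self_sqrt (ha_pos i j).le]
    have e2 : (fun j => (Real.sqrt (a i j) * |x j|) ^ 2) = fun j => a i j * x j ^ 2 := by
      funext j; rw [mul_pow, Real.sq_sqrt (ha_pos i j).le, sq_abs]
    have e3 : (fun j => Real.sqrt (a i j) ^ 2) = fun j => a i j := by
      funext j; rw [Real.sq_sqrt (ha_pos i j).le]
    rw [e1, e2, e3] at hcs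
    exact hcs.trans (mul_le_mul_of_nonneg_right (hS i).2 (hb0 i))
  have hmv : ∀ i, (mulVec M x i) ^ 2 ≤ C ^ 2 * S * b i := by
    intro i
    have h1 : |mulVec M x i| ≤ C * ∑' j, a i j * |x j| := by
      have hn : ‖∑' j, M i j * x j‖ ≤ ∑' j, ‖M i j * x j‖ :=
        norm_tsum_le_tsum_norm (by simpa [abs_mul] using habs i)
      simp only [Real.norm_eq_abs] at hn
      calc |mulVec M x i| ≤ ∑' j, |M i j * x j| := hn
        _ ≤ ∑' j, C * (a i j * |x j|) := by
            refine Summable.tsum_le_tsum (fun j => ?_) (habs i) ((haxs i).mul_left C)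
            rw [abs_mul, ← mul_assoc]
            exact mul_le_mul_of_nonneg_right (hM i j) (abs_nonneg _)
        _ = C * ∑' j, a i j * |x j| := tsum_mul_left
    have h2 := key i
    have h3 : 0 ≤ ∑' j, a i j * |x j| := tsum_nonneg fun j =>
      mul_nonneg (ha_pos i j).le (abs_nonneg _)
    nlinarith [sq_abs (mulVec M x i), abs_nonneg (mulVec M x i)]
  -- Fubini part
  have hG : Summable fun p : ℕ × ℕ => x p.1 ^ 2 * a p.2 p.1 := by
    rw [summable_prod_of_nonneg (fun p => mul_nonneg (sq_nonneg _) (ha_pos _ _).le)]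
    constructor
    · intro j
      have e : (fun i => x j ^ 2 * a i j) = fun i => x j ^ 2 * a j i := by
        funext i; rw [ha_symm i j]
      rw [e]; exact (hS j).1.mul_left _
    · refine Summable.of_nonneg_of_le (fun j => tsum_nonneg fun i =>
        mul_nonneg (sq_nonneg _) (ha_pos _ _).le) (fun j => ?_) (hx.mul_right S)
      have e : (fun i => x j ^ 2 * a i j) = fun i => x j ^ 2 * a j i := by
        funext i; rw [ha_symm i j]
      rw [show ∑' i, x j ^ 2 * a i j = ∑' i, x j ^ 2 * a j i from by rw [e], tsum_mul_left]
      exact mul_le_mul_of_nonneg_left (hS j).2 (sq_nonneg _)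
  have hGsplit := (summable_prod_of_nonneg
    (f := fun p : ℕ × ℕ => x p.1 ^ 2 * a p.2 p.1)
    (fun p => mul_nonneg (sq_nonneg _) (ha_pos _ _).le)).mp hG
  have hF : Summable fun p : ℕ × ℕ => a p.1 p.2 * x p.2 ^ 2 := by
    have h := (Equiv.prodComm ℕ ℕ).summable_iff.mpr hG
    simpa [Function.comp_def, mul_comm] using h
  have hFsplit := (summable_prod_of_nonneg
    (f := fun p : ℕ × ℕ => a p.1 p.2 * x p.2 ^ 2)
    (fun p => mul_nonneg (ha_pos _ _).le (sq_nonneg _))).mp hF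
  have hbsum : Summable b := hFsplit.2
  have hbts : ∑' i, b i ≤ S * ∑' j, x j ^ 2 := by
    have e1 : ∑' i, b i = ∑' p : ℕ × ℕ, a p.1 p.2 * x p.2 ^ 2 := (Summable.tsum_prod hF).symm
    have e2 : ∑' p : ℕ × ℕ, a p.1 p.2 * x p.2 ^ 2
        = ∑' p : ℕ × ℕ, x p.1 ^ 2 * a p.2 p.1 := by
      rw [← (Equiv.prodComm ℕ ℕ).tsum_eq (fun p : ℕ × ℕ => x p.1 ^ 2 * a p.2 p.1)]
      simp [Equiv.prodComm, mul_comm]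
    rw [e1, e2, Summable.tsum_prod hG]
    refine le_trans (Summable.tsum_le_tsum (fun j => ?_) hGsplit.2 (hx.mul_right S)) ?_
    · have e : (fun i => x j ^ 2 * a i j) = fun i => x j ^ 2 * a j i := by
        funext i; rw [ha_symm i j]
      rw [show ∑' i, x j ^ 2 * a i j = ∑' i, x j ^ 2 * a j i from by rw [e], tsum_mul_left]
      exact mul_le_mul_of_nonneg_left (hS j).2 (sq_nonneg _)
    · rw [← tsum_mul_left]
      exact le_of_eq (tsum_congr fun j => mul_comm _ _)
  have hmem : Memℓ2 (mulVec M x) := by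
    refine Summable.of_nonneg_of_le (fun i => sq_nonneg _) hmv (hbsum.mul_left (C ^ 2 * S))
  refine ⟨habs, hmem, ?_⟩
  have hts : ∑' i, (mulVec M x i) ^ 2 ≤ (C * S) ^ 2 * ∑' j, x j ^ 2 := by
    calc ∑' i, (mulVec M x i) ^ 2 ≤ ∑' i, C ^ 2 * S * b i :=
          Summable.tsum_le_tsum hmv hmem (hbsum.mul_left _)
      _ = C ^ 2 * S * ∑' i, b i := tsum_mul_left
      _ ≤ C ^ 2 * S * (S * ∑' j, x j ^ 2) :=
          mul_le_mul_of_nonneg_left hbts (by positivity)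
      _ = (C * S) ^ 2 * ∑' j, x j ^ 2 := by ring
  unfold l2norm
  calc Real.sqrt (∑' i, mulVec M x i ^ 2) ≤ Real.sqrt ((C * S) ^ 2 * ∑' j, x j ^ 2) :=
        Real.sqrt_le_sqrt hts
    _ = C * S * Real.sqrt (∑' j, x j ^ 2) := by
        rw [Real.sqrt_mul (by positivity), Real.sqrt_sq (by positivity)]

/-- a matrix of Jaffard class induces a bounded operator on ℓ²,
and so does its entrywise absolute value. -/
theorem jaffard_bounded
    (d : ℕ → ℕ → ℝ) (hd : IsMetric d) (hsum : SummCond d)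
    (γ : ℝ) (hγ : 0 < γ) (M : Mat) (hJ : Jaffard d γ M) :
    IsBoundedOp (fun i j => |M i j|) ∧ IsBoundedOp M := by
  obtain ⟨C, hC, hM⟩ := hJ (γ / 2) (half_pos hγ) (half_lt_self hγ)
  obtain ⟨S, hS⟩ := hsum (γ / 2) (half_pos hγ)
  refine ⟨core_bounded d hd (γ / 2) (half_pos hγ) S hS C hC _ (fun i j => ?_),
    core_bounded d hd (γ / 2) (half_pos hγ) S hS C hC M hM⟩
  simpa [abs_abs] using hM i j
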